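/- In the torus example X = 𝕋 ∪ H, for every a ∈ ℝ the map φ_a : X → X defined by φ_a(y) = g(a) + y for y ∈ 𝕋 and φ_a(g(t), t) = (g(t + a), t + a) for points of H is a well-defined surjective isometry of (X, d). -/

import Mathlib

/-- The distance of the Z-construction on the disjoint union `Y ⊕ (Y × ℝ)`. -/
noncomputable def zdist {Y : Type*} [MetricSpace Y] (R M : ℝ) :
    Y ⊕ Y × ℝ → Y ⊕ Y × ℝ → ℝ
  | Sum.inl y₁, Sum.inl y₂ => dist y₁ y₂
  | Sum.inl y₁, Sum.inr q => dist y₁ q.1 + R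
  | Sum.inr p, Sum.inl y₂ => dist p.1 y₂ + R
  | Sum.inr p, Sum.inr q => dist p.1 q.1 + min |p.2 - q.2| M

/-- The 2-torus `𝕋 = AddCircle 1 × AddCircle 1` with the product (max) metric. -/
abbrev T2 : Type := AddCircle (1 : ℝ) × AddCircle (1 : ℝ)

/-- The dense one-parameter subgroup `g(t) = (t mod 1, αt mod 1)` of the torus. -/
noncomputable def torusFlow (α : ℝ) (t : ℝ) : T2 :=
  ((t : AddCircle (1 : ℝ)), ((α * t : ℝ) : AddCircle (1 : ℝ)))

/-- The space `X = 𝕋 ∪ H` where `H = {(g(t), t) : t ∈ ℝ}`, as a subset of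
`Z = 𝕋 ⊕ (𝕋 × ℝ)`. -/
def torusX (α : ℝ) : Set (T2 ⊕ T2 × ℝ) :=
  {z | ∃ y : T2, z = Sum.inl y} ∪ {z | ∃ t : ℝ, z = Sum.inr (torusFlow α t, t)}

theorem memT (α : ℝ) (y : T2) : (Sum.inl y : T2 ⊕ T2 × ℝ) ∈ torusX α :=
  Or.inl ⟨y, rfl⟩

theorem memH (α : ℝ) (t : ℝ) :
    (Sum.inr (torusFlow α t, t) : T2 ⊕ T2 × ℝ) ∈ torusX α :=
  Or.inr ⟨t, rfl⟩

lemma torusFlow_add (α t a : ℝ) :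
    torusFlow α (t + a) = torusFlow α a + torusFlow α t := by
  simp only [torusFlow, Prod.mk_add_mk, mul_add]
  have : ∀ x y : ℝ, ((x + y : ℝ) : AddCircle (1:ℝ)) = (x:AddCircle (1:ℝ)) + y := by
    intro x y; rfl
  exact Prod.ext (by rw [this, add_comm]) (by show ((α*t+α*a :ℝ) : AddCircle (1:ℝ)) = _; rw [this, add_comm])

lemma torusX_inr (α : ℝ) {p : T2 × ℝ} (h : (Sum.inr p : T2 ⊕ T2 × ℝ) ∈ torusX α) :
    p.1 = torusFlow α p.2 := by
  rcases h with ⟨y, hy⟩ | ⟨t, ht⟩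
  · exact absurd hy (by simp)
  · obtain rfl : p = (torusFlow α t, t) := Sum.inr.injEq .. ▸ ht
    rfl

theorem torus_translation_isometry (α : ℝ) (hα : Irrational α)
    (R M : ℝ) (hM : 0 < M) (hRM : M ≤ 2 * R) (a : ℝ) :
    ∃ φ : torusX α → torusX α,
      Function.Surjective φ ∧
      (∀ p q : torusX α, zdist R M (φ p).1 (φ q).1 = zdist R M p.1 q.1) ∧
      (∀ y : T2, (φ ⟨Sum.inl y, memT α y⟩).1 = Sum.inl (torusFlow α a + y)) ∧
      (∀ t : ℝ, (φ ⟨Sum.inr (torusFlow α t, t), memH α t⟩).1 =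
          Sum.inr (torusFlow α (t + a), t + a)) := by
  refine ⟨fun z => match z with
    | ⟨Sum.inl y, _⟩ => ⟨Sum.inl (torusFlow α a + y), memT α _⟩
    | ⟨Sum.inr p, _⟩ => ⟨Sum.inr (torusFlow α (p.2 + a), p.2 + a), memH α _⟩,
    ?_, ?_, fun y => rfl, fun t => rfl⟩
  · rintro ⟨z, hz⟩
    rcases hz with ⟨y, rfl⟩ | ⟨t, rfl⟩
    · exact ⟨⟨Sum.inl (-torusFlow α a + y), memT α _⟩, by simp⟩
    · refine ⟨⟨Sum.inr (torusFlow α (t - a), t - a), memH α _⟩, ?_⟩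
      apply Subtype.ext
      simp only [Subtype.mk.injEq, Sum.inr.injEq, Prod.mk.injEq]
      constructor <;> [skip; ring] <;> congr 1 <;> ring
  · rintro ⟨z, hz⟩ ⟨w, hw⟩
    rcases z with y₁ | p₁ <;> rcases w with y₂ | p₂
    · simp [zdist]
    · have h2 := torusX_inr α hw
      simp [zdist, h2, torusFlow_add, dist_add_left]
    · have h1 := torusX_inr α hz
      simp [zdist, h1, torusFlow_add, dist_add_left]
    · have h1 := torusX_inr α hz
      have h2 := torusX_inr α hw
      simp [zdist, h1, h2, torusFlow_add, dist_add_left, add_sub_add_right_eq_sub]
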